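/- arXiv:1407.4666 — 4 statements merged into one kernel-verified Lean document; each statement's English description precedes it below -/
import Mathlib

section
/- Let n ≥ 1 and let S = {A_1, …, A_k} be a Sperner family on {1,…,n} with k ≥ 2, |A_j| ≥ 2 for every j = 1, …, k, and ⋂_{j=1}^k A_j = ∅, and let ω ∈ (0,1) be the unique fixed point of the module h_S in (0,1). Then the iterates h_S^{(N)} (the N-fold composition of h_S with itself) satisfy: lim_{N→∞} h_S^{(N)}(t) = 0 for every t ∈ [0, ω); h_S^{(N)}(ω) = ω for every N; and lim_{N→∞} h_S^{(N)}(t) = 1 for every t ∈ (ω, 1]. -/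
open MeasureTheory

/-- The Sperner statistic of a family `S` of subsets of `{1,…,n}`:
`H_S(x) = max_{A ∈ S} min_{i ∈ A} x_i`. -/
noncomputable def spernerStat {n : ℕ} (S : Finset (Finset (Fin n))) (hS : S.Nonempty)
    (hne : ∀ A ∈ S, A.Nonempty) (x : Fin n → ℝ) : ℝ :=
  S.attach.sup' (Finset.attach_nonempty_iff.mpr hS)
    (fun A => A.1.inf' (hne A.1 A.2) x)

/- The module of a Sperner family:
`h_S(t) = Σ_{ε ∈ {0,1}^n, H_S(ε)=0} t^{z(ε)} (1−t)^{n−z(ε)}`, where `z(ε)` is the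
number of zero coordinates of `ε`. -/
open scoped Classical in
noncomputable def spernerModule {n : ℕ} (S : Finset (Finset (Fin n))) (hS : S.Nonempty)
    (hne : ∀ A ∈ S, A.Nonempty) (t : ℝ) : ℝ :=
  ∑ ε : Fin n → Bool,
    if spernerStat S hS hne (fun i => if ε i then 1 else 0) = 0 then
      t ^ (Finset.univ.filter fun i => ε i = false).card *
        (1 - t) ^ (n - (Finset.univ.filter fun i => ε i = false).card)
    else 0

section Aux

variable {n : ℕ} {S : Finset (Finset (Fin n))} {hS : S.Nonempty}
  {hne : ∀ A ∈ S, A.Nonempty}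

/-- number of false coordinates -/
noncomputable def zc (ε : Fin n → Bool) : ℕ :=
  (Finset.univ.filter fun i => ε i = false).card

lemma zc_eq (ε : Fin n → Bool) :
    zc ε = (Finset.univ.filter fun i => ε i = false).card := rfl

lemma zc_add_true (ε : Fin n → Bool) :
    zc ε + (Finset.univ.filter fun i => ε i = true).card = n := by
  classical
  have h1 : (Finset.univ.filter fun i => ¬ ε i = false) =
      (Finset.univ.filter fun i => ε i = true) := by
    apply Finset.filter_congr
    intro i _
    simp
  have h2 := Finset.card_filter_add_card_filter_not
    (s := (Finset.univ : Finset (Fin n))) (p := fun i => ε i = false)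
  rw [h1] at h2
  simpa [zc_eq] using h2

lemma stat_ge_inf (ε : Fin n → Bool) {A : Finset (Fin n)} (hA : A ∈ S) :
    A.inf' (hne A hA) (fun i => if ε i then (1:ℝ) else 0)
      ≤ spernerStat S hS hne (fun i => if ε i then 1 else 0) := by
  unfold spernerStat
  exact Finset.le_sup'
    (fun A : {x // x ∈ S} => A.1.inf' (hne A.1 A.2) fun i => if ε i then (1:ℝ) else 0)
    (Finset.mem_attach _ ⟨A, hA⟩)

lemma inf_nonneg (ε : Fin n → Bool) {A : Finset (Fin n)} (hA : A ∈ S) :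
    (0:ℝ) ≤ A.inf' (hne A hA) (fun i => if ε i then (1:ℝ) else 0) := by
  apply Finset.le_inf'
  intro i _
  split <;> norm_num

lemma inf_ge_one (ε : Fin n → Bool) {A : Finset (Fin n)} (hA : A ∈ S)
    (h : ∀ i ∈ A, ε i = true) :
    (1:ℝ) ≤ A.inf' (hne A hA) (fun i => if ε i then (1:ℝ) else 0) := by
  apply Finset.le_inf'
  intro i hi
  simp [h i hi]

lemma inf_le_zero (ε : Fin n → Bool) {A : Finset (Fin n)} (hA : A ∈ S)
    {i : Fin n} (hi : i ∈ A) (hfi : ε i = false) :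
    A.inf' (hne A hA) (fun i => if ε i then (1:ℝ) else 0) ≤ 0 := by
  have := Finset.inf'_le (fun j => if ε j then (1:ℝ) else 0) hi
  exact this.trans (by simp [hfi])

/-- If the stat is zero, every member of `S` has a false coordinate. -/
lemma stat_zero_forall (ε : Fin n → Bool)
    (h : spernerStat S hS hne (fun i => if ε i then 1 else 0) = 0) :
    ∀ A ∈ S, ∃ i ∈ A, ε i = false := by
  intro A hA
  by_contra hc
  push_neg at hc
  have hall : ∀ i ∈ A, ε i = true := by
    intro i hi
    have := hc i hi
    simpa using this
  have h1 := inf_ge_one (hne := hne) ε hA hall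
  have h2 := stat_ge_inf (hS := hS) (hne := hne) ε hA
  rw [h] at h2
  linarith

/-- If the stat is nonzero, some member of `S` is all-true. -/
lemma stat_ne_exists (ε : Fin n → Bool)
    (h : spernerStat S hS hne (fun i => if ε i then 1 else 0) ≠ 0) :
    ∃ A ∈ S, ∀ i ∈ A, ε i = true := by
  by_contra hc
  push_neg at hc
  apply h
  have hle : spernerStat S hS hne (fun i => if ε i then 1 else 0) ≤ 0 := by
    unfold spernerStat
    apply Finset.sup'_le
    rintro ⟨A, hA⟩ -
    obtain ⟨i, hi, hfi⟩ : ∃ i ∈ A, ε i = false := by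
      obtain ⟨i, hi, hfi⟩ := hc A hA
      exact ⟨i, hi, by simpa using hfi⟩
    exact inf_le_zero (hne := hne) ε hA hi hfi
  have hge : (0:ℝ) ≤ spernerStat S hS hne (fun i => if ε i then 1 else 0) := by
    obtain ⟨A, hA⟩ := id hS
    exact (inf_nonneg (hne := hne) ε hA).trans (stat_ge_inf (hS := hS) (hne := hne) ε hA)
  linarith

/-- Every stat-zero ε has at least two false coordinates. -/
lemma two_le_zc (hint : S.inf' hS id = ∅) (ε : Fin n → Bool)
    (h : spernerStat S hS hne (fun i => if ε i then 1 else 0) = 0) :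
    2 ≤ zc ε := by
  classical
  by_contra hlt
  push_neg at hlt
  have hforall := stat_zero_forall (hS := hS) (hne := hne) ε h
  obtain ⟨A₀, hA₀⟩ := id hS
  obtain ⟨i₀, hi₀, hfi₀⟩ := hforall A₀ hA₀
  have hmem : i₀ ∈ Finset.univ.filter fun i => ε i = false := by simp [hfi₀]
  have hcard1 : (Finset.univ.filter fun i => ε i = false).card = 1 := by
    have h1 : 1 ≤ (Finset.univ.filter fun i => ε i = false).card :=
      Finset.card_pos.mpr ⟨i₀, hmem⟩
    have hz := zc_eq ε
    omega
  obtain ⟨j, hj⟩ := Finset.card_eq_one.mp hcard1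
  have hjall : ∀ A ∈ S, j ∈ A := by
    intro A hA
    obtain ⟨i, hi, hfi⟩ := hforall A hA
    have hij : i = j := by
      have hmem' : i ∈ Finset.univ.filter fun i => ε i = false := by simp [hfi]
      rw [hj] at hmem'
      simpa using hmem'
    exact hij ▸ hi
  have hsub : ({j} : Finset (Fin n)) ≤ S.inf' hS id := by
    apply Finset.le_inf'
    intro A hA
    simpa [Finset.singleton_subset_iff] using hjall A hA
  rw [hint] at hsub
  simpa using hsub

/-- Every ε with nonzero stat has at least two true coordinates. -/
lemma two_le_true (hcard : ∀ A ∈ S, 2 ≤ A.card) (ε : Fin n → Bool)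
    (h : spernerStat S hS hne (fun i => if ε i then 1 else 0) ≠ 0) :
    2 ≤ n - zc ε := by
  classical
  obtain ⟨A, hA, hall⟩ := stat_ne_exists (hS := hS) (hne := hne) ε h
  have hsub : A ⊆ Finset.univ.filter fun i => ε i = true := by
    intro i hi; simp [hall i hi]
  have h2 : 2 ≤ (Finset.univ.filter fun i => ε i = true).card :=
    le_trans (hcard A hA) (Finset.card_le_card hsub)
  have h3 := zc_add_true ε
  omega

/-- The total Bernoulli mass is 1. -/
lemma total_sum (t : ℝ) :
    ∑ ε : Fin n → Bool, t ^ zc ε * (1 - t) ^ (n - zc ε) = 1 := by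
  classical
  have key : ∀ ε : Fin n → Bool,
      t ^ zc ε * (1 - t) ^ (n - zc ε)
        = ∏ i : Fin n, (if ε i = true then (1 - t) else t) := by
    intro ε
    rw [Finset.prod_ite (f := fun _ => (1 - t)) (g := fun _ => t)]
    rw [Finset.prod_const, Finset.prod_const]
    have h1 : (Finset.univ.filter fun i => ¬ ε i = true) =
        (Finset.univ.filter fun i => ε i = false) := by
      apply Finset.filter_congr
      intro i _
      simp
    rw [h1]
    have h2 : (Finset.univ.filter fun i => ε i = true).card = n - zc ε := by
      have h3 := zc_add_true ε
      omega
    rw [h2, ← zc_eq]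
    ring
  rw [Finset.sum_congr rfl (fun ε _ => key ε)]
  rw [← Fintype.prod_sum (fun (_ : Fin n) (b : Bool) => if b = true then (1 - t) else t)]
  simp

variable (S hS hne) in
lemma module_nonneg {t : ℝ} (h0 : 0 ≤ t) (h1 : t ≤ 1) :
    0 ≤ spernerModule S hS hne t := by
  classical
  unfold spernerModule
  apply Finset.sum_nonneg
  intro ε _
  split
  · exact mul_nonneg (pow_nonneg h0 _) (pow_nonneg (by linarith) _)
  · exact le_refl 0

variable (S hS hne) in
lemma module_le_one {t : ℝ} (h0 : 0 ≤ t) (h1 : t ≤ 1) :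
    spernerModule S hS hne t ≤ 1 := by
  classical
  calc spernerModule S hS hne t
      ≤ ∑ ε : Fin n → Bool, t ^ zc ε * (1 - t) ^ (n - zc ε) := by
        unfold spernerModule
        apply Finset.sum_le_sum
        intro ε _
        split
        · exact le_refl _
        · exact mul_nonneg (pow_nonneg h0 _) (pow_nonneg (by linarith) _)
    _ = 1 := total_sum t

variable (S hS hne) in
lemma module_quad_low (hint : S.inf' hS id = ∅) {t : ℝ} (h0 : 0 ≤ t) (h1 : t ≤ 1) :
    spernerModule S hS hne t ≤ 2 ^ n * t ^ 2 := by
  classical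
  have hb : ∀ ε : Fin n → Bool,
      (if spernerStat S hS hne (fun i => if ε i then 1 else 0) = 0 then
        t ^ zc ε * (1 - t) ^ (n - zc ε) else 0) ≤ t ^ 2 := by
    intro ε
    split
    case isTrue hP =>
      have h2 := two_le_zc (hS := hS) (hne := hne) hint ε hP
      calc t ^ zc ε * (1 - t) ^ (n - zc ε) ≤ t ^ zc ε * 1 := by
            apply mul_le_mul_of_nonneg_left _ (pow_nonneg h0 _)
            exact pow_le_one₀ (by linarith) (by linarith)
        _ = t ^ zc ε := mul_one _
        _ ≤ t ^ 2 := pow_le_pow_of_le_one h0 h1 h2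
    case isFalse => positivity
  calc spernerModule S hS hne t ≤ ∑ _ε : Fin n → Bool, t ^ 2 := by
        unfold spernerModule
        exact Finset.sum_le_sum (fun ε _ => hb ε)
    _ = 2 ^ n * t ^ 2 := by
        rw [Finset.sum_const]
        simp [Finset.card_univ, mul_comm]

variable (S hS hne) in
lemma module_quad_high (hcard : ∀ A ∈ S, 2 ≤ A.card) {t : ℝ} (h0 : 0 ≤ t) (h1 : t ≤ 1) :
    1 - spernerModule S hS hne t ≤ 2 ^ n * (1 - t) ^ 2 := by
  classical
  have hdiff : 1 - spernerModule S hS hne t =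
      ∑ ε : Fin n → Bool,
        (if spernerStat S hS hne (fun i => if ε i then 1 else 0) = 0 then 0 else
          t ^ zc ε * (1 - t) ^ (n - zc ε)) := by
    conv_lhs => rw [← total_sum (n := n) t]
    unfold spernerModule
    rw [← Finset.sum_sub_distrib]
    apply Finset.sum_congr rfl
    intro ε _
    split <;> simp only [zc_eq] <;> ring
  rw [hdiff]
  have hb : ∀ ε : Fin n → Bool,
      (if spernerStat S hS hne (fun i => if ε i then 1 else 0) = 0 then 0 else
        t ^ zc ε * (1 - t) ^ (n - zc ε)) ≤ (1 - t) ^ 2 := by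
    intro ε
    split
    case isTrue => positivity
    case isFalse hP =>
      have h2 := two_le_true (hS := hS) (hne := hne) hcard ε hP
      calc t ^ zc ε * (1 - t) ^ (n - zc ε) ≤ 1 * (1 - t) ^ (n - zc ε) := by
            apply mul_le_mul_of_nonneg_right _ (pow_nonneg (by linarith) _)
            exact pow_le_one₀ h0 h1
        _ = (1 - t) ^ (n - zc ε) := one_mul _
        _ ≤ (1 - t) ^ 2 := pow_le_pow_of_le_one (by linarith) (by linarith) h2
  calc (∑ ε : Fin n → Bool,
        (if spernerStat S hS hne (fun i => if ε i then 1 else 0) = 0 then 0 else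
          t ^ zc ε * (1 - t) ^ (n - zc ε)))
      ≤ ∑ _ε : Fin n → Bool, (1 - t) ^ 2 := Finset.sum_le_sum (fun ε _ => hb ε)
    _ = 2 ^ n * (1 - t) ^ 2 := by
        rw [Finset.sum_const]
        simp [Finset.card_univ, mul_comm]

variable (S hS hne) in
lemma module_continuous : Continuous (spernerModule S hS hne) := by
  unfold spernerModule
  apply continuous_finset_sum
  intro ε _
  split
  · fun_prop
  · exact continuous_const

end Aux

variable {n : ℕ} {S : Finset (Finset (Fin n))} {hS : S.Nonempty}
  {hne : ∀ A ∈ S, A.Nonempty}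

variable (S hS hne) in
lemma module_zero (hint : S.inf' hS id = ∅) : spernerModule S hS hne 0 = 0 := by
  have h1 := module_quad_low S hS hne hint (le_refl (0:ℝ)) zero_le_one
  have h2 := module_nonneg S hS hne (le_refl (0:ℝ)) zero_le_one
  simp at h1
  linarith

variable (S hS hne) in
lemma module_one (hcard : ∀ A ∈ S, 2 ≤ A.card) : spernerModule S hS hne 1 = 1 := by
  have h1 := module_quad_high S hS hne hcard zero_le_one (le_refl (1:ℝ))
  have h2 := module_le_one S hS hne zero_le_one (le_refl (1:ℝ))
  simp at h1
  linarith

/-- Iteration of the module of a Sperner family (with at least two members, all of size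
at least two and with empty common intersection) around its unique fixed point
`ω ∈ (0,1)`: the iterates tend to `0` below `ω`, fix `ω`, and tend to `1` above `ω`. -/
theorem sperner_module_iterates_limit
    (n : ℕ) (hn : 1 ≤ n) (S : Finset (Finset (Fin n))) (hS : S.Nonempty)
    (hne : ∀ A ∈ S, A.Nonempty) (hsp : ∀ A ∈ S, ∀ B ∈ S, A ⊆ B → A = B)
    (hk : 2 ≤ S.card) (hcard : ∀ A ∈ S, 2 ≤ A.card) (hint : S.inf' hS id = ∅)
    (ω : ℝ) (hω : ω ∈ Set.Ioo (0 : ℝ) 1) (hfix : spernerModule S hS hne ω = ω)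
    (huniq : ∀ ω' ∈ Set.Ioo (0 : ℝ) 1, spernerModule S hS hne ω' = ω' → ω' = ω) :
    (∀ t ∈ Set.Ico (0 : ℝ) ω,
      Filter.Tendsto (fun N => (spernerModule S hS hne)^[N] t) Filter.atTop (nhds 0)) ∧
    (∀ N : ℕ, (spernerModule S hS hne)^[N] ω = ω) ∧
    (∀ t ∈ Set.Ioc ω (1 : ℝ),
      Filter.Tendsto (fun N => (spernerModule S hS hne)^[N] t) Filter.atTop (nhds 1)) := by
  obtain ⟨hω0, hω1⟩ := hω
  set h : ℝ → ℝ := spernerModule S hS hne with hh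
  have hcont : Continuous h := module_continuous S hS hne
  have h0 : h 0 = 0 := module_zero S hS hne hint
  have h1 : h 1 = 1 := module_one S hS hne hcard
  have hCpos : (0:ℝ) < 2 ^ n := by positivity
  -- the sign of h t - t below ω
  have hlow : ∀ t ∈ Set.Ioo (0:ℝ) ω, h t < t := by
    intro s hs
    by_contra hge
    push_neg at hge
    have hgt : s < h s := by
      rcases eq_or_lt_of_le hge with he | hlt
      · exact absurd (huniq s ⟨hs.1, hs.2.trans hω1⟩ he.symm) (by linarith [hs.2])
      · exact hlt
    set t₀ : ℝ := min (ω/2) ((2:ℝ)^(n+1))⁻¹ with ht₀def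
    have ht₀pos : 0 < t₀ := lt_min (by linarith) (by positivity)
    have ht₀ω : t₀ < ω := (min_le_left _ _).trans_lt (by linarith)
    have ht₀1 : t₀ ≤ 1 := by
      have := min_le_left (ω/2) ((2:ℝ)^(n+1))⁻¹
      linarith
    have hq : h t₀ < t₀ := by
      have hA := module_quad_low S hS hne hint ht₀pos.le ht₀1
      have e1 : t₀ ≤ ((2:ℝ)^(n+1))⁻¹ := min_le_right _ _
      have e2 : (2:ℝ)^n * t₀ ≤ (2:ℝ)^n * ((2:ℝ)^(n+1))⁻¹ :=
        mul_le_mul_of_nonneg_left e1 hCpos.le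
      have e3 : (2:ℝ)^n * ((2:ℝ)^(n+1))⁻¹ = 1/2 := by
        rw [pow_succ]
        field_simp
      have e4 : (2:ℝ)^n * t₀^2 ≤ (1/2) * t₀ := by
        have := mul_le_mul_of_nonneg_right (e2.trans_eq e3) ht₀pos.le
        nlinarith
      calc h t₀ ≤ (2:ℝ)^n * t₀^2 := hA
        _ ≤ (1/2) * t₀ := e4
        _ < t₀ := by linarith
    rcases lt_trichotomy t₀ s with hts | hts | hts
    · have hmem : (0:ℝ) ∈ Set.Ioo (h t₀ - t₀) (h s - s) := ⟨by linarith, by linarith⟩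
      obtain ⟨c, hc, hc0⟩ := intermediate_value_Ioo hts.le
        ((hcont.sub continuous_id).continuousOn) hmem
      have hcfix : h c = c := by
        simpa [sub_eq_zero] using hc0
      have : c = ω := huniq c ⟨ht₀pos.trans hc.1, (hc.2.trans hs.2).trans hω1⟩ hcfix
      linarith [hc.2, hs.2]
    · exact absurd hq (by rw [hts]; linarith)
    · have hmem : (0:ℝ) ∈ Set.Ioo (h t₀ - t₀) (h s - s) := ⟨by linarith, by linarith⟩
      obtain ⟨c, hc, hc0⟩ := intermediate_value_Ioo' hts.le
        ((hcont.sub continuous_id).continuousOn) hmem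
      have hcfix : h c = c := by
        simpa [sub_eq_zero] using hc0
      have : c = ω := huniq c ⟨hs.1.trans hc.1, (hc.2.trans ht₀ω).trans hω1⟩ hcfix
      linarith [hc.2, ht₀ω]
  -- the sign of h t - t above ω
  have hhigh : ∀ t ∈ Set.Ioo ω (1:ℝ), t < h t := by
    intro s hs
    by_contra hge
    push_neg at hge
    have hgt : h s < s := by
      rcases eq_or_lt_of_le hge with he | hlt
      · exact absurd (huniq s ⟨hω0.trans hs.1, hs.2⟩ he) (by linarith [hs.1])
      · exact hlt
    set t₁ : ℝ := max ((ω+1)/2) (1 - ((2:ℝ)^(n+1))⁻¹) with ht₁def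
    have hinvpos : (0:ℝ) < ((2:ℝ)^(n+1))⁻¹ := by positivity
    have ht₁lt1 : t₁ < 1 := max_lt (by linarith) (by linarith)
    have ht₁gtω : ω < t₁ := lt_of_lt_of_le (by linarith) (le_max_left _ _)
    have ht₁pos : 0 ≤ t₁ := le_trans (by linarith) (le_max_left _ _)
    have hq : t₁ < h t₁ := by
      have hA := module_quad_high S hS hne hcard ht₁pos ht₁lt1.le
      have e1 : 1 - t₁ ≤ ((2:ℝ)^(n+1))⁻¹ := by
        have := le_max_right ((ω+1)/2) (1 - ((2:ℝ)^(n+1))⁻¹)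
        linarith
      have e2 : (2:ℝ)^n * (1 - t₁) ≤ (2:ℝ)^n * ((2:ℝ)^(n+1))⁻¹ :=
        mul_le_mul_of_nonneg_left e1 hCpos.le
      have e3 : (2:ℝ)^n * ((2:ℝ)^(n+1))⁻¹ = 1/2 := by
        rw [pow_succ]
        field_simp
      have e4 : (2:ℝ)^n * (1 - t₁)^2 ≤ (1/2) * (1 - t₁) := by
        have := mul_le_mul_of_nonneg_right (e2.trans_eq e3) (by linarith : (0:ℝ) ≤ 1 - t₁)
        nlinarith
      have : 1 - h t₁ ≤ (1/2) * (1 - t₁) := hA.trans e4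
      linarith
    rcases lt_trichotomy s t₁ with hts | hts | hts
    · have hmem : (0:ℝ) ∈ Set.Ioo (h s - s) (h t₁ - t₁) := ⟨by linarith, by linarith⟩
      obtain ⟨c, hc, hc0⟩ := intermediate_value_Ioo hts.le
        ((hcont.sub continuous_id).continuousOn) hmem
      have hcfix : h c = c := by
        simpa [sub_eq_zero] using hc0
      have : c = ω := huniq c ⟨hω0.trans (hs.1.trans hc.1), hc.2.trans ht₁lt1⟩ hcfix
      linarith [hc.1, hs.1]
    · exact absurd hq (by rw [← hts]; linarith)
    · have hmem : (0:ℝ) ∈ Set.Ioo (h s - s) (h t₁ - t₁) := ⟨by linarith, by linarith⟩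
      obtain ⟨c, hc, hc0⟩ := intermediate_value_Ioo' hts.le
        ((hcont.sub continuous_id).continuousOn) hmem
      have hcfix : h c = c := by
        simpa [sub_eq_zero] using hc0
      have : c = ω := huniq c ⟨hω0.trans (ht₁gtω.trans hc.1), hc.2.trans hs.2⟩ hcfix
      linarith [hc.1, ht₁gtω]
  refine ⟨?_, fun N => Function.iterate_fixed hfix N, ?_⟩
  · -- below ω : iterates tend to 0
    intro t ht
    set a : ℕ → ℝ := fun N => h^[N] t with ha
    have hstep : ∀ N, a (N+1) = h (a N) := fun N => Function.iterate_succ_apply' h N t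
    have hmem : ∀ N, a N ∈ Set.Ico (0:ℝ) ω := by
      intro N
      induction N with
      | zero => simpa [ha] using ht
      | succ N ih =>
        rw [hstep]
        rcases eq_or_lt_of_le ih.1 with he | hpos
        · rw [← he, h0]
          exact ⟨le_rfl, hω0⟩
        · refine ⟨module_nonneg S hS hne hpos.le (by linarith [ih.2]), ?_⟩
          exact (hlow (a N) ⟨hpos, ih.2⟩).trans ih.2
    have hdec : ∀ N, a (N+1) ≤ a N := by
      intro N
      rw [hstep]
      rcases eq_or_lt_of_le (hmem N).1 with he | hpos
      · rw [← he, h0]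
      · exact (hlow _ ⟨hpos, (hmem N).2⟩).le
    have hanti : Antitone a := antitone_nat_of_succ_le hdec
    have hbdd : BddBelow (Set.range a) := ⟨0, by rintro x ⟨N, rfl⟩; exact (hmem N).1⟩
    have htend : Filter.Tendsto a Filter.atTop (nhds (⨅ N, a N)) :=
      tendsto_atTop_ciInf hanti hbdd
    set L : ℝ := ⨅ N, a N with hL
    have hL0 : 0 ≤ L := le_ciInf fun N => (hmem N).1
    have hLt : L ≤ t := by
      have := ciInf_le hbdd 0
      simpa [ha] using this
    have hfixL : h L = L := by
      have h1' : Filter.Tendsto (fun N => a (N+1)) Filter.atTop (nhds L) :=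
        htend.comp (Filter.tendsto_add_atTop_nat 1)
      have h2' : Filter.Tendsto (fun N => h (a N)) Filter.atTop (nhds (h L)) :=
        (hcont.tendsto L).comp htend
      have heq : (fun N => a (N+1)) = fun N => h (a N) := funext hstep
      rw [heq] at h1'
      exact tendsto_nhds_unique h2' h1'
    have hL00 : L = 0 := by
      by_contra hne0
      have hpos : 0 < L := lt_of_le_of_ne hL0 (Ne.symm hne0)
      have := hlow L ⟨hpos, lt_of_le_of_lt hLt ht.2⟩
      linarith [hfixL]
    rw [hL00] at htend
    exact htend
  · -- above ω : iterates tend to 1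
    intro t ht
    set a : ℕ → ℝ := fun N => h^[N] t with ha
    have hstep : ∀ N, a (N+1) = h (a N) := fun N => Function.iterate_succ_apply' h N t
    have hmem : ∀ N, a N ∈ Set.Ioc ω (1:ℝ) := by
      intro N
      induction N with
      | zero => simpa [ha] using ht
      | succ N ih =>
        rw [hstep]
        rcases eq_or_lt_of_le ih.2 with he | hlt
        · rw [he, h1]
          exact ⟨hω1, le_rfl⟩
        · refine ⟨ih.1.trans (hhigh (a N) ⟨ih.1, hlt⟩), ?_⟩
          exact module_le_one S hS hne (by linarith [ih.1]) hlt.le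
    have hinc : ∀ N, a N ≤ a (N+1) := by
      intro N
      rw [hstep]
      rcases eq_or_lt_of_le (hmem N).2 with he | hlt
      · rw [he, h1]
      · exact (hhigh _ ⟨(hmem N).1, hlt⟩).le
    have hmono : Monotone a := monotone_nat_of_le_succ hinc
    have hbdd : BddAbove (Set.range a) := ⟨1, by rintro x ⟨N, rfl⟩; exact (hmem N).2⟩
    have htend : Filter.Tendsto a Filter.atTop (nhds (⨆ N, a N)) :=
      tendsto_atTop_ciSup hmono hbdd
    set L : ℝ := ⨆ N, a N with hL
    have hL1 : L ≤ 1 := ciSup_le fun N => (hmem N).2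
    have hLt : t ≤ L := by
      have := le_ciSup hbdd 0
      simpa [ha] using this
    have hfixL : h L = L := by
      have h1' : Filter.Tendsto (fun N => a (N+1)) Filter.atTop (nhds L) :=
        htend.comp (Filter.tendsto_add_atTop_nat 1)
      have h2' : Filter.Tendsto (fun N => h (a N)) Filter.atTop (nhds (h L)) :=
        (hcont.tendsto L).comp htend
      have heq : (fun N => a (N+1)) = fun N => h (a N) := funext hstep
      rw [heq] at h1'
      exact tendsto_nhds_unique h2' h1'
    have hL11 : L = 1 := by
      by_contra hne1
      have hlt1 : L < 1 := lt_of_le_of_ne hL1 hne1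
      have := hhigh L ⟨lt_of_lt_of_le ht.1 hLt, hlt1⟩
      linarith [hfixL]
    rw [hL11] at htend
    exact htend
end

section
/- Let n and r be integers with 1 < r < n. Then the module h_{r:n}(t) = Σ_{j=r}^n C(n,j) t^j (1 − t)^{n−j} of the r-th order statistic has exactly one fixed point ω_{r:n} in the open interval (0,1), and this fixed point is repellent: h_{r:n}′(ω_{r:n}) > 1. -/
open Set Finset

/-- The module of the `r`-th order statistic of `n` variables:
`h_{r:n}(t) = Σ_{j=r}^n C(n,j) t^j (1−t)^{n−j}`. -/
noncomputable def orderModule (n r : ℕ) (t : ℝ) : ℝ :=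
  ∑ j ∈ Finset.Icc r n, (n.choose j : ℝ) * t ^ j * (1 - t) ^ (n - j)

lemma nat_id1 (n j : ℕ) (hj : 1 ≤ j) (hn : 1 ≤ n) :
    j * n.choose j = n * (n - 1).choose (j - 1) := by
  obtain ⟨k, rfl⟩ : ∃ k, j = k + 1 := ⟨j - 1, by omega⟩
  obtain ⟨m, rfl⟩ : ∃ m, n = m + 1 := ⟨n - 1, by omega⟩
  simp only [Nat.add_sub_cancel]
  rw [mul_comm]
  exact (Nat.add_one_mul_choose_eq m k).symm

lemma nat_id2 (n j : ℕ) (hn : 1 ≤ n) :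
    (n - j) * n.choose j = n * (n - 1).choose j := by
  have h1 := Nat.choose_succ_right_eq n j
  have h2 := nat_id1 n (j + 1) (by omega) hn
  simp only [Nat.add_sub_cancel] at h2
  rw [mul_comm, ← h1, mul_comm]
  exact h2

lemma orderModule_hasDerivAt (n r : ℕ) (hr : 1 ≤ r) (hrn : r ≤ n) (t : ℝ) :
    HasDerivAt (orderModule n r)
      ((n * (n - 1).choose (r - 1) : ℕ) * (t ^ (r - 1) * (1 - t) ^ (n - r))) t := by
  set A : ℕ → ℝ := fun j => (n * (n - 1).choose (j - 1) : ℕ) * (t ^ (j - 1) * (1 - t) ^ (n - j))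
    with hA
  have key : HasDerivAt (orderModule n r) (∑ j ∈ Finset.Icc r n, (A j - A (j + 1))) t := by
    apply HasDerivAt.fun_sum
    intro j hj
    simp only [Finset.mem_Icc] at hj
    have h1 : HasDerivAt (fun t : ℝ => t ^ j) (j * t ^ (j - 1)) t := hasDerivAt_pow j t
    have h2 : HasDerivAt (fun t : ℝ => (1 - t) ^ (n - j))
        ((n - j : ℕ) * (1 - t) ^ (n - j - 1) * (-1)) t :=
      (hasDerivAt_pow (n - j) (1 - t)).comp t ((hasDerivAt_id t).const_sub 1)
    have h3 := (h1.const_mul (n.choose j : ℝ)).mul h2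
    refine h3.congr_deriv ?_
    have e1 : (j : ℝ) * n.choose j = n * (n - 1).choose (j - 1) := by
      exact_mod_cast congrArg (Nat.cast (R := ℝ)) (nat_id1 n j (by omega) (by omega))
    have e2 : ((n - j : ℕ) : ℝ) * n.choose j = n * (n - 1).choose j := by
      exact_mod_cast congrArg (Nat.cast (R := ℝ)) (nat_id2 n j (by omega))
    simp only [hA, Nat.add_sub_cancel, Nat.cast_mul]
    have e3 : n - (j + 1) = n - j - 1 := by omega
    rw [e3, ← e1, ← e2]
    ring
  have tel : (∑ j ∈ Finset.Icc r n, (A j - A (j + 1))) =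
      (n * (n - 1).choose (r - 1) : ℕ) * (t ^ (r - 1) * (1 - t) ^ (n - r)) := by
    rw [← Finset.Ico_add_one_right_eq_Icc, Finset.sum_Ico_eq_sum_range]
    calc ∑ k ∈ Finset.range (n.succ - r), (A (r + k) - A (r + k + 1))
        = ∑ k ∈ Finset.range (n + 1 - r), (A (r + k) - A (r + (k + 1))) := by
          simp only [Nat.add_assoc, Nat.succ_eq_add_one]
      _ = A (r + 0) - A (r + (n + 1 - r)) := Finset.sum_range_sub' (fun i => A (r + i)) _
      _ = A r - A (n + 1) := by rw [Nat.add_zero, show r + (n + 1 - r) = n + 1 by omega]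
      _ = (n * (n - 1).choose (r - 1) : ℕ) * (t ^ (r - 1) * (1 - t) ^ (n - r)) := by
          have : (n - 1).choose n = 0 :=
            Nat.choose_eq_zero_of_lt (by omega)
          simp [hA, this]
  rw [← tel]; exact key


-- generic kernel function
lemma ker_hasDerivAt (c : ℝ) (p q : ℕ) (t : ℝ) :
    HasDerivAt (fun t : ℝ => c * (t ^ (p + 1) * (1 - t) ^ (q + 1)))
      (c * ((t ^ p * (1 - t) ^ q) * ((p + 1 : ℝ) - (p + q + 2 : ℝ) * t))) t := by
  have h1 : HasDerivAt (fun t : ℝ => t ^ (p + 1)) ((p + 1 : ℕ) * t ^ p) t := by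
    simpa using hasDerivAt_pow (p + 1) t
  have h2 : HasDerivAt (fun t : ℝ => (1 - t) ^ (q + 1))
      ((q + 1 : ℕ) * (1 - t) ^ q * (-1)) t := by
    simpa [Function.comp_def] using (hasDerivAt_pow (q + 1) (1 - t)).comp t ((hasDerivAt_id t).const_sub 1)
  have h3 := (h1.mul h2).const_mul c
  refine h3.congr_deriv ?_
  rw [pow_succ t p, pow_succ (1 - t) q]
  push_cast
  ring

lemma ker_strictMonoOn (c : ℝ) (hc : 0 < c) (p q : ℕ) :
    StrictMonoOn (fun t : ℝ => c * (t ^ (p + 1) * (1 - t) ^ (q + 1)))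
      (Icc 0 ((p + 1 : ℝ) / (p + q + 2 : ℝ))) := by
  have hm : (0 : ℝ) < (p + 1 : ℝ) / (p + q + 2 : ℝ) := by positivity
  have hm1 : (p + 1 : ℝ) / (p + q + 2 : ℝ) < 1 := by
    rw [div_lt_one (by positivity)]; push_cast; linarith
  apply strictMonoOn_of_deriv_pos (convex_Icc _ _)
  · fun_prop
  · intro x hx
    rw [interior_Icc, Set.mem_Ioo] at hx
    rw [(ker_hasDerivAt c p q x).deriv]
    have hx1 : x < 1 := lt_trans hx.2 hm1
    have hlin : 0 < (p + 1 : ℝ) - (p + q + 2 : ℝ) * x := by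
      have := hx.2
      rw [lt_div_iff₀ (by positivity)] at this
      linarith
    have hx0 : 0 < x := hx.1
    have hpow : (0:ℝ) < x ^ p * (1 - x) ^ q :=
      mul_pos (pow_pos hx0 p) (pow_pos (by linarith) q)
    exact mul_pos hc (mul_pos hpow hlin)
  
lemma ker_strictAntiOn (c : ℝ) (hc : 0 < c) (p q : ℕ) :
    StrictAntiOn (fun t : ℝ => c * (t ^ (p + 1) * (1 - t) ^ (q + 1)))
      (Icc ((p + 1 : ℝ) / (p + q + 2 : ℝ)) 1) := by
  have hm : (0 : ℝ) < (p + 1 : ℝ) / (p + q + 2 : ℝ) := by positivity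
  apply strictAntiOn_of_deriv_neg (convex_Icc _ _)
  · fun_prop
  · intro x hx
    rw [interior_Icc, Set.mem_Ioo] at hx
    rw [(ker_hasDerivAt c p q x).deriv]
    have hx0 : 0 < x := lt_trans hm hx.1
    have hlin : (p + 1 : ℝ) - (p + q + 2 : ℝ) * x < 0 := by
      have := hx.1
      rw [div_lt_iff₀ (by positivity)] at this
      linarith
    have hx1 : (0:ℝ) < 1 - x := by linarith [hx.2]
    have hpow : (0:ℝ) < x ^ p * (1 - x) ^ q :=
      mul_pos (pow_pos hx0 p) (pow_pos hx1 q)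
    nlinarith [mul_pos (mul_pos hc hpow) (neg_pos.mpr hlin)]



lemma orderModule_zero (n r : ℕ) (hr : 1 ≤ r) : orderModule n r 0 = 0 := by
  unfold orderModule
  apply Finset.sum_eq_zero
  intro j hj
  rw [Finset.mem_Icc] at hj
  have : j ≠ 0 := by omega
  simp [zero_pow this]

lemma orderModule_one (n r : ℕ) (hrn : r ≤ n) : orderModule n r 1 = 1 := by
  unfold orderModule
  rw [Finset.sum_eq_single_of_mem n (Finset.mem_Icc.mpr ⟨hrn, le_refl n⟩)]
  · simp
  · intro j hj hne
    rw [Finset.mem_Icc] at hj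
    have : n - j ≠ 0 := by omega
    simp [zero_pow this]

/-- For `1 < r < n`, the module `h_{r:n}` of the `r`-th order statistic has exactly one
fixed point in `(0,1)`, which is repellent: `h_{r:n}′(ω) > 1`. -/
theorem orderModule_unique_repellent_fixed_point
    (n r : ℕ) (hr : 1 < r) (hrn : r < n) :
    ∃ ω ∈ Set.Ioo (0 : ℝ) 1, orderModule n r ω = ω ∧
      1 < deriv (orderModule n r) ω ∧
      ∀ ω' ∈ Set.Ioo (0 : ℝ) 1, orderModule n r ω' = ω' → ω' = ω := by
  obtain ⟨p, hp⟩ : ∃ p, r - 1 = p + 1 := ⟨r - 2, by omega⟩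
  obtain ⟨q, hq⟩ : ∃ q, n - r = q + 1 := ⟨n - r - 1, by omega⟩
  set c : ℝ := ((n * (n - 1).choose (r - 1) : ℕ) : ℝ) with hcdef
  have hc : 0 < c := by
    have h1 : 0 < (n - 1).choose (r - 1) := Nat.choose_pos (by omega)
    have h2 : 0 < n := by omega
    rw [hcdef]
    exact_mod_cast Nat.mul_pos h2 h1
  set f : ℝ → ℝ := fun t : ℝ => c * (t ^ (p + 1) * (1 - t) ^ (q + 1)) with hfdef
  have hderiv : ∀ t : ℝ, HasDerivAt (orderModule n r) (f t) t := by
    intro t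
    have h := orderModule_hasDerivAt n r (by omega) (by omega) t
    have e : f t = ((n * (n - 1).choose (r - 1) : ℕ) : ℝ) * (t ^ (r - 1) * (1 - t) ^ (n - r)) := by
      rw [hfdef, hcdef, hp, hq]
    rw [e]
    exact h
  set m : ℝ := (p + 1 : ℝ) / (p + q + 2 : ℝ) with hmdef
  have hm0 : (0 : ℝ) < m := by rw [hmdef]; positivity
  have hm1 : m < 1 := by
    rw [hmdef, div_lt_one (by positivity)]; push_cast; linarith
  have mono : StrictMonoOn f (Icc 0 m) := ker_strictMonoOn c hc p q
  have anti : StrictAntiOn f (Icc m 1) := ker_strictAntiOn c hc p q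
  have fcont : Continuous f := by rw [hfdef]; fun_prop
  set g : ℝ → ℝ := fun t => orderModule n r t - t with hgdef
  have gderiv : ∀ t : ℝ, HasDerivAt g (f t - 1) t := fun t =>
    (hderiv t).sub (hasDerivAt_id t)
  have gcont : Continuous g :=
    continuous_iff_continuousAt.mpr fun t => (gderiv t).continuousAt
  have g0 : g 0 = 0 := by rw [hgdef]; simp [orderModule_zero n r (by omega)]
  have g1 : g 1 = 0 := by rw [hgdef]; simp [orderModule_one n r (by omega)]
  have f0 : f 0 = 0 := by rw [hfdef]; simp
  have f1 : f 1 = 0 := by rw [hfdef]; simp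
  -- the maximum of f exceeds 1
  have fm : 1 < f m := by
    by_contra h
    push_neg at h
    have ga1 : StrictAntiOn g (Icc 0 m) := by
      apply strictAntiOn_of_deriv_neg (convex_Icc _ _) gcont.continuousOn
      intro x hx
      rw [interior_Icc, Set.mem_Ioo] at hx
      rw [(gderiv x).deriv]
      have : f x < f m := mono ⟨hx.1.le, hx.2.le⟩ ⟨hm0.le, le_refl m⟩ hx.2
      linarith
    have ga2 : StrictAntiOn g (Icc m 1) := by
      apply strictAntiOn_of_deriv_neg (convex_Icc _ _) gcont.continuousOn
      intro x hx
      rw [interior_Icc, Set.mem_Ioo] at hx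
      rw [(gderiv x).deriv]
      have : f x < f m := anti ⟨le_refl m, hm1.le⟩ ⟨hx.1.le, hx.2.le⟩ hx.1
      linarith
    have h1 : g m < g 0 := ga1 ⟨le_refl 0, hm0.le⟩ ⟨hm0.le, le_refl m⟩ hm0
    have h2 : g 1 < g m := ga2 ⟨le_refl m, hm1.le⟩ ⟨hm1.le, le_refl 1⟩ hm1
    rw [g0] at h1; rw [g1] at h2
    linarith
  -- crossing points of f with level 1
  obtain ⟨a, ha, hfa⟩ : ∃ a ∈ Ioo (0 : ℝ) m, f a = 1 :=
    intermediate_value_Ioo hm0.le fcont.continuousOn (by rw [f0]; exact ⟨one_pos, fm⟩)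
  obtain ⟨b, hb, hfb⟩ : ∃ b ∈ Ioo m (1 : ℝ), f b = 1 :=
    intermediate_value_Ioo' hm1.le fcont.continuousOn (by rw [f1]; exact ⟨one_pos, fm⟩)
  have hab : a < b := lt_trans ha.2 hb.1
  have key : ∀ t ∈ Ioo a b, 1 < f t := by
    intro t ht
    rcases le_total t m with h | h
    · have := mono ⟨ha.1.le, ha.2.le⟩ ⟨(lt_trans ha.1 ht.1).le, h⟩ ht.1
      rw [hfa] at this; exact this
    · have := anti ⟨h, (lt_trans ht.2 hb.2).le⟩ ⟨hb.1.le, hb.2.le⟩ ht.2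
      rw [hfb] at this; exact this
  have gAnti1 : StrictAntiOn g (Icc 0 a) := by
    apply strictAntiOn_of_deriv_neg (convex_Icc _ _) gcont.continuousOn
    intro x hx
    rw [interior_Icc, Set.mem_Ioo] at hx
    rw [(gderiv x).deriv]
    have : f x < f a := mono ⟨hx.1.le, (lt_trans hx.2 ha.2).le⟩ ⟨ha.1.le, ha.2.le⟩ hx.2
    rw [hfa] at this; linarith
  have gMono : StrictMonoOn g (Icc a b) := by
    apply strictMonoOn_of_deriv_pos (convex_Icc _ _) gcont.continuousOn
    intro x hx
    rw [interior_Icc] at hx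
    rw [(gderiv x).deriv]
    have := key x hx
    linarith
  have gAnti2 : StrictAntiOn g (Icc b 1) := by
    apply strictAntiOn_of_deriv_neg (convex_Icc _ _) gcont.continuousOn
    intro x hx
    rw [interior_Icc, Set.mem_Ioo] at hx
    rw [(gderiv x).deriv]
    have : f x < f b := anti ⟨hb.1.le, hb.2.le⟩ ⟨(lt_trans hb.1 hx.1).le, hx.2.le⟩ hx.1
    rw [hfb] at this; linarith
  have ga : g a < 0 := by
    have := gAnti1 ⟨le_refl 0, ha.1.le⟩ ⟨ha.1.le, le_refl a⟩ ha.1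
    rw [g0] at this; exact this
  have gb : 0 < g b := by
    have := gAnti2 ⟨le_refl b, hb.2.le⟩ ⟨hb.2.le, le_refl 1⟩ hb.2
    rw [g1] at this; exact this
  obtain ⟨ω, hω, hgω⟩ : ∃ ω ∈ Ioo a b, g ω = 0 :=
    intermediate_value_Ioo hab.le gcont.continuousOn ⟨ga, gb⟩
  have hω01 : ω ∈ Ioo (0 : ℝ) 1 := ⟨lt_trans ha.1 hω.1, lt_trans hω.2 hb.2⟩
  refine ⟨ω, hω01, ?_, ?_, ?_⟩
  · have : orderModule n r ω - ω = 0 := hgω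
    linarith
  · rw [(hderiv ω).deriv]
    exact key ω hω
  · intro ω' hω' heq
    have hg' : g ω' = 0 := by rw [hgdef]; simp [heq]
    have h1 : a < ω' := by
      by_contra h
      push_neg at h
      have := gAnti1 ⟨le_refl 0, (lt_of_lt_of_le hω'.1 h).le⟩ ⟨hω'.1.le, h⟩ hω'.1
      rw [g0, hg'] at this; linarith
    have h2 : ω' < b := by
      by_contra h
      push_neg at h
      have := gAnti2 ⟨h, hω'.2.le⟩ ⟨(lt_of_le_of_lt h hω'.2).le, le_refl 1⟩ hω'.2
      rw [g1, hg'] at this; linarith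
    exact gMono.injOn ⟨h1.le, h2.le⟩ ⟨hω.1.le, hω.2.le⟩ (hg'.trans hgω.symm)
end

section
/- Let n be an integer with n ≥ 3 and, for 1 < r < n, let ω_{r:n} denote the unique fixed point in (0,1) of the module h_{r:n}. Then for every r with 1 < r < n, |ω_{r:n} − (2r − 1)/(2n)| ≤ √(ln(n)/n). -/
open Finset

private lemma sum_choose_mul (x y : ℝ) (n : ℕ) :
    ∑ j ∈ Finset.range (n + 1), (n.choose j : ℝ) * x ^ j * y ^ (n - j) = (x + y) ^ n := by
  rw [add_pow]
  exact Finset.sum_congr rfl fun j _ => by ring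

private lemma pinsker_core {t p : ℝ} (ht1 : t < 1) (hp : 0 < p) (hpt : p ≤ t) :
    t * Real.log p + (1 - t) * Real.log (1 - p) + 2 * (t - p) ^ 2
      ≤ t * Real.log t + (1 - t) * Real.log (1 - t) := by
  set F : ℝ → ℝ := fun x => t * Real.log x + (1 - t) * Real.log (1 - x) + 2 * (t - x) ^ 2
    with hF
  have key : ∀ x ∈ Set.Icc p t,
      HasDerivAt F (t / x - (1 - t) / (1 - x) - 4 * (t - x)) x := by
    intro x hx
    have hx0 : 0 < x := lt_of_lt_of_le hp hx.1
    have hx1 : x < 1 := lt_of_le_of_lt hx.2 ht1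
    have h1 : HasDerivAt (fun x : ℝ => t * Real.log x) (t * x⁻¹) x :=
      (Real.hasDerivAt_log (ne_of_gt hx0)).const_mul t
    have h2' : HasDerivAt (fun x : ℝ => 1 - x) (-1) x := by
      simpa using (hasDerivAt_id x).const_sub 1
    have h2 : HasDerivAt (fun x : ℝ => (1 - t) * Real.log (1 - x))
        ((1 - t) * (-1 / (1 - x))) x :=
      (h2'.log (by linarith)).const_mul (1 - t)
    have h3' : HasDerivAt (fun x : ℝ => t - x) (-1) x := by
      simpa using (hasDerivAt_id x).const_sub t
    have h3 : HasDerivAt (fun x : ℝ => 2 * (t - x) ^ 2)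
        (2 * ((2 : ℕ) * (t - x) ^ 1 * (-1))) x := (h3'.pow 2).const_mul 2
    have h := (h1.add h2).add h3
    convert h using 1
    have hx1' : (1 : ℝ) - x ≠ 0 := by linarith
    · rfl
    · rfl
    · rfl
    push_cast
    ring
  have mono : MonotoneOn F (Set.Icc p t) := by
    apply monotoneOn_of_deriv_nonneg (convex_Icc p t)
    · exact fun x hx => (key x hx).continuousAt.continuousWithinAt
    · intro x hx
      rw [interior_Icc] at hx
      exact (key x (Set.mem_Icc_of_Ioo hx)).differentiableAt.differentiableWithinAt
    · intro x hx
      rw [interior_Icc] at hx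
      have hx' := Set.mem_Icc_of_Ioo hx
      rw [(key x hx').deriv]
      have hx0 : 0 < x := lt_of_lt_of_le hp hx'.1
      have hx1 : x < 1 := lt_of_le_of_lt hx'.2 ht1
      have heq : t / x - (1 - t) / (1 - x) - 4 * (t - x)
          = (t - x) * (1 - 2 * x) ^ 2 / (x * (1 - x)) := by
        have hx0' : x ≠ 0 := hx0.ne'
        have h1x : (1 : ℝ) - x ≠ 0 := by linarith
        rw [eq_div_iff (mul_ne_zero hx0' h1x)]
        field_simp
        ring
      rw [heq]
      apply div_nonneg
      · exact mul_nonneg (by linarith [hx'.2]) (sq_nonneg _)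
      · nlinarith
  have := mono (Set.left_mem_Icc.2 hpt) (Set.right_mem_Icc.2 hpt) hpt
  simpa [hF] using this

private lemma chernoff {n r : ℕ} {p : ℝ} (hp : 0 < p) (hp1 : p < 1) (hr0 : 0 < r)
    (hrn : r < n) (hpt : p ≤ (r : ℝ) / n) :
    ∑ j ∈ Icc r n, (n.choose j : ℝ) * p ^ j * (1 - p) ^ (n - j)
      ≤ (p / ((r : ℝ) / n)) ^ r * ((1 - p) / (1 - (r : ℝ) / n)) ^ (n - r) := by
  have hn0 : (0 : ℝ) < n := by
    have : 0 < n := lt_trans hr0 hrn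
    exact_mod_cast this
  set t : ℝ := (r : ℝ) / n with hts
  have ht0 : 0 < t := div_pos (by exact_mod_cast hr0) hn0
  have ht1 : t < 1 := by
    rw [hts, div_lt_one hn0]
    exact_mod_cast hrn
  have hq : (0 : ℝ) < 1 - p := by linarith
  have h1t : (0 : ℝ) < 1 - t := by linarith
  set q : ℝ := 1 - p with hqs
  set c : ℝ := t * q / (p * (1 - t)) with hcs
  have hc0 : 0 < c := by positivity
  have hc1 : 1 ≤ c := by
    rw [hcs, le_div_iff₀ (by positivity)]
    nlinarith
  have step1 : ∑ j ∈ Icc r n, (n.choose j : ℝ) * p ^ j * q ^ (n - j)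
      ≤ ∑ j ∈ Icc r n, ((n.choose j : ℝ) * (p * c) ^ j * q ^ (n - j)) / c ^ r := by
    apply Finset.sum_le_sum
    intro j hj
    have hjr : r ≤ j := (Finset.mem_Icc.1 hj).1
    have hkey : ((n.choose j : ℝ) * (p * c) ^ j * q ^ (n - j)) / c ^ r
        = ((n.choose j : ℝ) * p ^ j * q ^ (n - j)) * c ^ (j - r) := by
      rw [pow_sub₀ c hc0.ne' hjr, mul_pow]
      field_simp
    rw [hkey]
    nth_rewrite 1 [← mul_one ((n.choose j : ℝ) * p ^ j * q ^ (n - j))]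
    apply mul_le_mul_of_nonneg_left (one_le_pow₀ hc1)
    positivity
  have step2 : ∑ j ∈ Icc r n, ((n.choose j : ℝ) * (p * c) ^ j * q ^ (n - j)) / c ^ r
      ≤ (p * c + q) ^ n / c ^ r := by
    rw [← Finset.sum_div]
    apply (div_le_div_iff_of_pos_right (by positivity : (0:ℝ) < c ^ r)).2
    have hsub : Icc r n ⊆ range (n + 1) := by
      intro j hj
      exact Finset.mem_range.2 (Nat.lt_succ_of_le (Finset.mem_Icc.1 hj).2)
    calc ∑ j ∈ Icc r n, (n.choose j : ℝ) * (p * c) ^ j * q ^ (n - j)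
        ≤ ∑ j ∈ range (n + 1), (n.choose j : ℝ) * (p * c) ^ j * q ^ (n - j) := by
          apply Finset.sum_le_sum_of_subset_of_nonneg hsub
          intro j _ _
          positivity
      _ = (p * c + q) ^ n := sum_choose_mul _ _ n
  have hpc : p * c + q = q / (1 - t) := by
    rw [hcs]
    field_simp
    ring
  have step3 : (p * c + q) ^ n / c ^ r
      = (p / t) ^ r * (q / (1 - t)) ^ (n - r) := by
    rw [hpc]
    have hsplit : (q / (1 - t)) ^ n = (q / (1 - t)) ^ r * (q / (1 - t)) ^ (n - r) := by
      rw [← pow_add, Nat.add_sub_cancel' hrn.le]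
    rw [hsplit]
    have hdc : q / (1 - t) / c = p / t := by
      rw [hcs]
      field_simp
    rw [mul_comm ((q / (1 - t)) ^ r), mul_div_assoc, ← div_pow, hdc]
    ring
  calc ∑ j ∈ Icc r n, (n.choose j : ℝ) * p ^ j * q ^ (n - j)
      ≤ (p * c + q) ^ n / c ^ r := le_trans step1 step2
    _ = (p / t) ^ r * (q / (1 - t)) ^ (n - r) := step3

private lemma pinsker_exp {n r : ℕ} {p : ℝ} (hr0 : 0 < r) (hrn : r < n) (hp : 0 < p)
    (hpt : p ≤ (r : ℝ) / n) :
    (p / ((r : ℝ) / n)) ^ r * ((1 - p) / (1 - (r : ℝ) / n)) ^ (n - r)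
      ≤ Real.exp (-(2 * n * ((r : ℝ) / n - p) ^ 2)) := by
  have hn0 : (0 : ℝ) < n := by
    have : 0 < n := lt_trans hr0 hrn
    exact_mod_cast this
  set t : ℝ := (r : ℝ) / n with hts
  have ht0 : 0 < t := div_pos (by exact_mod_cast hr0) hn0
  have ht1 : t < 1 := by
    rw [hts, div_lt_one hn0]
    exact_mod_cast hrn
  have hq : (0 : ℝ) < 1 - p := by linarith
  have h1t : (0 : ℝ) < 1 - t := by linarith
  have hA : (p / t) ^ r = Real.exp (r * Real.log (p / t)) := by
    rw [Real.exp_nat_mul, Real.exp_log (by positivity)]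
  have hB : ((1 - p) / (1 - t)) ^ (n - r)
      = Real.exp ((n - r : ℕ) * Real.log ((1 - p) / (1 - t))) := by
    rw [Real.exp_nat_mul, Real.exp_log (by positivity)]
  rw [hA, hB, ← Real.exp_add]
  apply Real.exp_le_exp.2
  have hcast : ((n - r : ℕ) : ℝ) = (n : ℝ) - r := by
    exact_mod_cast Nat.cast_sub hrn.le
  have hrt : (r : ℝ) = n * t := by
    rw [hts]
    field_simp
  rw [Real.log_div hp.ne' ht0.ne', Real.log_div hq.ne' h1t.ne', hcast, hrt]
  have core := pinsker_core ht1 hp hpt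
  nlinarith [mul_le_mul_of_nonneg_left core hn0.le]

private lemma orderModule_compl {n r : ℕ} (hr : 1 ≤ r) (hrn : r ≤ n) (t : ℝ) :
    ∑ k ∈ Icc (n - r + 1) n, (n.choose k : ℝ) * (1 - t) ^ k * t ^ (n - k)
      = 1 - orderModule n r t := by
  have htot : ∑ j ∈ range (n + 1), (n.choose j : ℝ) * t ^ j * (1 - t) ^ (n - j) = 1 := by
    rw [sum_choose_mul]
    simp
  have hsplit : ∑ j ∈ range (n + 1), (n.choose j : ℝ) * t ^ j * (1 - t) ^ (n - j)
      = (∑ j ∈ range r, (n.choose j : ℝ) * t ^ j * (1 - t) ^ (n - j)) + orderModule n r t := by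
    rw [orderModule, range_eq_Ico, ← Finset.Ico_add_one_right_eq_Icc,
      ← Finset.sum_Ico_consecutive _ (Nat.zero_le r) (by omega : r ≤ n + 1), range_eq_Ico]
  have hre : ∑ k ∈ Icc (n - r + 1) n, (n.choose k : ℝ) * (1 - t) ^ k * t ^ (n - k)
      = ∑ j ∈ range r, (n.choose j : ℝ) * t ^ j * (1 - t) ^ (n - j) := by
    apply Finset.sum_nbij' (fun k => n - k) (fun j => n - j)
    · intro k hk
      rw [Finset.mem_Icc] at hk
      exact Finset.mem_range.2 (by omega)
    · intro j hj
      rw [Finset.mem_range] at hj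
      exact Finset.mem_Icc.2 (by omega)
    · intro k hk
      rw [Finset.mem_Icc] at hk
      omega
    · intro j hj
      rw [Finset.mem_range] at hj
      omega
    · intro k hk
      rw [Finset.mem_Icc] at hk
      have hkn : k ≤ n := hk.2
      rw [Nat.choose_symm hkn, Nat.sub_sub_self hkn]
      ring
  linarith [htot, hsplit, hre]

private lemma no_fixed_far {n r : ℕ} {p : ℝ} (hn : 3 ≤ n) (hr2 : 2 ≤ r) (hrn : r + 1 ≤ n)
    (hp0 : 0 < p) (hp1 : p < 1)
    (hfix : ∑ j ∈ Icc r n, (n.choose j : ℝ) * p ^ j * (1 - p) ^ (n - j) = p)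
    (hdev : Real.sqrt (Real.log n / n) + 1 / (2 * n) ≤ (r : ℝ) / n - p) : False := by
  have hn0 : (0 : ℝ) < n := by positivity
  have hn3 : (3 : ℝ) ≤ n := by exact_mod_cast hn
  have hrn' : r < n := by omega
  have hr0 : 0 < r := by omega
  have hlogn : 0 ≤ Real.log n := Real.log_nonneg (by linarith)
  have hsq : 0 ≤ Real.sqrt (Real.log n / n) := Real.sqrt_nonneg _
  have hpt : p ≤ (r : ℝ) / n := by
    have h2n : 0 < 1 / (2 * (n : ℝ)) := by positivity
    linarith
  -- p ≤ 1/n²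
  have h1 : p ≤ Real.exp (-(2 * n * ((r : ℝ) / n - p) ^ 2)) := by
    have h := le_trans (chernoff hp0 hp1 hr0 hrn' hpt) (pinsker_exp hr0 hrn' hp0 hpt)
    rw [hfix] at h
    exact h
  have h2 : Real.exp (-(2 * n * ((r : ℝ) / n - p) ^ 2)) ≤ Real.exp (-(2 * Real.log n)) := by
    apply Real.exp_le_exp.2
    apply neg_le_neg
    have hdev' : Real.sqrt (Real.log n / n) ≤ (r : ℝ) / n - p := by
      have h2n : 0 < 1 / (2 * (n : ℝ)) := by positivity
      linarith
    have hsq2 : Real.log n / n ≤ ((r : ℝ) / n - p) ^ 2 := by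
      have := Real.sq_sqrt (show (0:ℝ) ≤ Real.log n / n by positivity)
      nlinarith
    have := mul_le_mul_of_nonneg_left hsq2 (show (0:ℝ) ≤ 2 * n by positivity)
    calc 2 * Real.log n = 2 * (n : ℝ) * (Real.log n / n) := by
          field_simp
      _ ≤ 2 * n * ((r : ℝ) / n - p) ^ 2 := this
  have h3 : Real.exp (-(2 * Real.log n)) = 1 / ((n : ℝ) * n) := by
    rw [Real.exp_neg, show (2 : ℝ) * Real.log n = Real.log n + Real.log n by ring,
      Real.exp_add, Real.exp_log hn0]
    rw [one_div]
  have hple : p ≤ 1 / ((n : ℝ) * n) := by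
    rw [← h3]
    exact le_trans h1 h2
  -- combinatorial contradiction
  have hp2 : p * ((n : ℝ) * n) ≤ 1 := by
    rw [← le_div_iff₀ (by positivity : (0:ℝ) < (n : ℝ) * n)]
    exact hple
  have hx1 : (n : ℝ) * p ≤ 1 := by nlinarith
  have hA : p ≤ ∑ j ∈ Icc 2 n, (n.choose j : ℝ) * p ^ j := by
    have hA' :
        ∑ j ∈ Icc r n, (n.choose j : ℝ) * p ^ j * (1 - p) ^ (n - j)
          ≤ ∑ j ∈ Icc 2 n, (n.choose j : ℝ) * p ^ j := by
      calc ∑ j ∈ Icc r n, (n.choose j : ℝ) * p ^ j * (1 - p) ^ (n - j)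
          ≤ ∑ j ∈ Icc r n, (n.choose j : ℝ) * p ^ j := by
            apply Finset.sum_le_sum
            intro j _
            nth_rewrite 2 [← mul_one ((n.choose j : ℝ) * p ^ j)]
            apply mul_le_mul_of_nonneg_left (pow_le_one₀ (by linarith) (by linarith))
            positivity
        _ ≤ ∑ j ∈ Icc 2 n, (n.choose j : ℝ) * p ^ j := by
            apply Finset.sum_le_sum_of_subset_of_nonneg
            · exact Finset.Icc_subset_Icc_left hr2
            · intro j _ _
              positivity
    rw [hfix] at hA'
    exact hA'
  have hB : ∑ j ∈ Icc 2 n, (n.choose j : ℝ) * p ^ j = (1 + p) ^ n - (1 + n * p) := by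
    have htot : ∑ j ∈ range (n + 1), (n.choose j : ℝ) * p ^ j = (1 + p) ^ n := by
      have := sum_choose_mul p 1 n
      simp only [one_pow, mul_one] at this
      rw [add_comm 1 p]
      exact this
    have hsplit : ∑ j ∈ range (n + 1), (n.choose j : ℝ) * p ^ j
        = (∑ j ∈ range 2, (n.choose j : ℝ) * p ^ j) + ∑ j ∈ Icc 2 n, (n.choose j : ℝ) * p ^ j := by
      rw [range_eq_Ico, ← Finset.Ico_add_one_right_eq_Icc,
        ← Finset.sum_Ico_consecutive _ (Nat.zero_le 2) (by omega : 2 ≤ n + 1), range_eq_Ico]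
    have h01 : ∑ j ∈ range 2, (n.choose j : ℝ) * p ^ j = 1 + n * p := by
      simp [Finset.sum_range_succ, Nat.choose_one_right]
    rw [htot, h01] at hsplit
    linarith
  have hC : (1 + p) ^ n ≤ Real.exp ((n : ℝ) * p) := by
    rw [Real.exp_nat_mul]
    apply pow_le_pow_left₀ (by linarith)
    linarith [Real.add_one_le_exp p]
  have hD : Real.exp ((n : ℝ) * p) ≤ 1 + n * p + 3 / 4 * ((n : ℝ) * p) ^ 2 := by
    have hx0 : 0 ≤ (n : ℝ) * p := by positivity
    have habs : |(n : ℝ) * p| ≤ 1 := by rwa [abs_of_nonneg hx0]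
    have := Real.exp_bound habs (by norm_num : 0 < 2)
    rw [abs_sub_le_iff] at this
    have h1' := this.1
    have hs : ∑ m ∈ range 2, ((n : ℝ) * p) ^ m / m.factorial = 1 + n * p := by
      simp [Finset.sum_range_succ]
    rw [hs, abs_of_nonneg hx0] at h1'
    norm_num at h1'
    linarith
  have hfinal : p ≤ 3 / 4 * ((n : ℝ) * p) ^ 2 := by linarith
  have h5 : ((n : ℝ) * p) ^ 2 ≤ p := by nlinarith [mul_le_mul_of_nonneg_left hp2 hp0.le]
  linarith

/-- Location of the fixed point of the module of the `r`-th order statistic: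
`|ω_{r:n} − (2r−1)/(2n)| ≤ √(ln n / n)` for `1 < r < n`. -/
theorem orderModule_fixed_point_location
    (n : ℕ) (hn : 3 ≤ n) (ω : ℕ → ℝ)
    (hω : ∀ r : ℕ, 1 < r → r < n →
      ω r ∈ Set.Ioo (0 : ℝ) 1 ∧ orderModule n r (ω r) = ω r) :
    ∀ r : ℕ, 1 < r → r < n →
      |ω r - (2 * (r : ℝ) - 1) / (2 * (n : ℝ))| ≤ Real.sqrt (Real.log n / n) := by
  intro r hr1 hrn
  obtain ⟨⟨hω0, hω1⟩, hfix⟩ := hω r hr1 hrn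
  have hn0 : (0 : ℝ) < n := by positivity
  have hrr : (0 : ℝ) < r := by positivity
  by_contra hcon
  push_neg at hcon
  rcases lt_abs.1 hcon with hhigh | hlow
  · -- ω r > t* + ε : use complement at r' = n - r + 1, p = 1 - ω r
    have hfix' : ∑ k ∈ Icc (n - r + 1) n,
        (n.choose k : ℝ) * (1 - ω r) ^ k * (1 - (1 - ω r)) ^ (n - k) = 1 - ω r := by
      have h := orderModule_compl (by omega : 1 ≤ r) hrn.le (ω r)
      rw [hfix] at h
      simpa [sub_sub_cancel] using h
    apply no_fixed_far hn (by omega : 2 ≤ n - r + 1) (by omega : (n - r + 1) + 1 ≤ n)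
      (by linarith : (0:ℝ) < 1 - ω r) (by linarith : 1 - ω r < 1) hfix'
    have hcast : ((n - r + 1 : ℕ) : ℝ) = (n : ℝ) - r + 1 := by
      push_cast [Nat.cast_sub hrn.le]
      ring
    rw [hcast]
    have hkey : ((n : ℝ) - r + 1) / n - (1 - ω r)
        = 1 / (2 * n) + (ω r - (2 * (r : ℝ) - 1) / (2 * (n : ℝ))) := by
      field_simp
      ring
    rw [hkey]
    linarith
  · -- ω r < t* - ε : p = ω r
    apply no_fixed_far hn (by omega : 2 ≤ r) (by omega : r + 1 ≤ n)
      hω0 hω1 (by rw [show (∑ j ∈ Icc r n, (n.choose j : ℝ) * ω r ^ j * (1 - ω r) ^ (n - j)) = orderModule n r (ω r) from rfl, hfix])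
    have hkey : (r : ℝ) / n - ω r
        = 1 / (2 * n) + ((2 * (r : ℝ) - 1) / (2 * (n : ℝ)) - ω r) := by
      field_simp
      ring
    rw [hkey]
    linarith
end

section
/- Let k ≥ 2 be an integer and let α_1, …, α_k be integers with α_j ≥ 2 for every j = 1, …, k. Then the equation ∏_{j=1}^k (1 − s^{α_j}) = 1 − s has exactly one solution s in the open interval (0,1). -/
open Finset Set

private lemma weierstrass_prod {ι : Type*} [DecidableEq ι] (s : Finset ι) (f : ι → ℝ)
    (h0 : ∀ i ∈ s, 0 ≤ f i) (h1 : ∀ i ∈ s, f i ≤ 1) :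
    1 - ∑ i ∈ s, f i ≤ ∏ i ∈ s, (1 - f i) := by
  induction s using Finset.induction with
  | empty => simp
  | insert a s hnot ih =>
    rw [Finset.prod_insert hnot, Finset.sum_insert hnot]
    have h0' : ∀ i ∈ s, 0 ≤ f i := fun i hi => h0 i (Finset.mem_insert_of_mem hi)
    have h1' : ∀ i ∈ s, f i ≤ 1 := fun i hi => h1 i (Finset.mem_insert_of_mem hi)
    have ha0 := h0 a (Finset.mem_insert_self a s)
    have ha1 := h1 a (Finset.mem_insert_self a s)
    have hs0 : 0 ≤ ∑ i ∈ s, f i := Finset.sum_nonneg h0'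
    nlinarith [ih h0' h1']

/-- For `k ≥ 2` and integers `α_j ≥ 2`, the equation `∏_{j=1}^k (1 − s^{α_j}) = 1 − s`
has exactly one solution `s` in `(0,1)`. -/
theorem zermelo_fixed_point_equation_unique_solution
    (k : ℕ) (hk : 2 ≤ k) (α : Fin k → ℕ) (hα : ∀ j, 2 ≤ α j) :
    ∃! s : ℝ, s ∈ Set.Ioo (0 : ℝ) 1 ∧ ∏ j, (1 - s ^ α j) = 1 - s := by
  classical
  have hkR : (2:ℝ) ≤ (k:ℝ) := by exact_mod_cast hk
  have hfact : ∀ (x : ℝ), 0 ≤ x → x < 1 → ∀ j : Fin k, 0 < 1 - x ^ α j := by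
    intro x hx0 hx1 j
    have : x ^ α j < 1 := pow_lt_one₀ hx0 hx1 (by have := hα j; omega)
    linarith
  set G : Fin k → ℝ → ℝ := fun j x => ∑ i ∈ Finset.range (α j), x ^ i with hG
  have hgeom : ∀ (j : Fin k) (x : ℝ), 1 - x ^ α j = (1 - x) * G j x := by
    intro j x
    have h := geom_sum_mul x (α j)
    simp only [hG]
    linear_combination h
  have hGpos : ∀ (j : Fin k) (x : ℝ), 0 < x → 0 < G j x := by
    intro j x hx
    apply Finset.sum_pos (fun i _ => pow_pos hx i)
    exact Finset.nonempty_range_iff.mpr (by have := hα j; omega)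
  set H : ℝ → ℝ := fun x => ∑ j, (α j : ℝ) * x ^ (α j - 1) / G j x with hH
  have hHmono : ∀ x y : ℝ, 0 < x → x < y → y < 1 → H x < H y := by
    intro x y hx hxy hy1
    have hy : 0 < y := hx.trans hxy
    have : Nonempty (Fin k) := ⟨⟨0, by omega⟩⟩
    apply Finset.sum_lt_sum_of_nonempty Finset.univ_nonempty
    intro j _
    rw [div_lt_div_iff₀ (hGpos j x hx) (hGpos j y hy)]
    have hαj : 0 < (α j : ℝ) := by have := hα j; positivity
    rw [mul_assoc, mul_assoc, mul_lt_mul_iff_right₀ hαj]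
    simp only [hG, Finset.mul_sum]
    apply Finset.sum_lt_sum
    · intro i hi
      rw [Finset.mem_range] at hi
      obtain ⟨d, hd⟩ : ∃ d, α j - 1 = i + d := ⟨α j - 1 - i, by omega⟩
      rw [hd]
      calc x ^ (i + d) * y ^ i = (x ^ i * y ^ i) * x ^ d := by rw [pow_add]; ring
        _ ≤ (x ^ i * y ^ i) * y ^ d := by
            apply mul_le_mul_of_nonneg_left (pow_le_pow_left₀ hx.le hxy.le d)
            positivity
        _ = y ^ (i + d) * x ^ i := by rw [pow_add]; ring
    · refine ⟨0, Finset.mem_range.mpr (by have := hα j; omega), ?_⟩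
      simp only [pow_zero, mul_one]
      exact pow_lt_pow_left₀ hxy hx.le (by have := hα j; omega)
  set F : ℝ → ℝ := fun x => Real.log (1 - x) - ∑ j, Real.log (1 - x ^ α j) with hF
  set F' : ℝ → ℝ := fun x =>
      -1 / (1 - x) - ∑ j, -((α j : ℝ) * x ^ (α j - 1)) / (1 - x ^ α j) with hF'
  have hderiv : ∀ x ∈ Set.Ioo (0:ℝ) 1, HasDerivAt F (F' x) x := by
    intro x hx
    have hx0 := hx.1
    have hx1 := hx.2
    have h1 : HasDerivAt (fun y : ℝ => 1 - y) (-1 : ℝ) x := by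
      simpa using (hasDerivAt_id x).const_sub 1
    have hlog1 : HasDerivAt (fun y : ℝ => Real.log (1 - y)) (-1 / (1 - x)) x :=
      h1.log (ne_of_gt (by linarith))
    have hsum : HasDerivAt (fun y : ℝ => ∑ j, Real.log (1 - y ^ α j))
        (∑ j, -((α j : ℝ) * x ^ (α j - 1)) / (1 - x ^ α j)) x := by
      apply HasDerivAt.fun_sum
      intro j _
      exact ((hasDerivAt_pow (α j) x).const_sub 1).log (ne_of_gt (hfact x hx0.le hx1 j))
    simpa [hF, hF'] using hlog1.fun_sub hsum
  have hcont : ∀ c : ℝ, c < 1 → ContinuousOn F (Set.Icc 0 c) := by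
    intro c hc
    have hsub : Set.Icc (0:ℝ) c ⊆ Set.Ico 0 1 := fun x hx => ⟨hx.1, lt_of_le_of_lt hx.2 hc⟩
    apply ContinuousOn.mono ?_ hsub
    apply ContinuousOn.sub
    · apply ContinuousOn.log (continuousOn_const.sub continuousOn_id)
      intro x hx
      have : (0:ℝ) < 1 - x := by simp only [Set.mem_Ico] at hx; linarith [hx.2]
      exact ne_of_gt this
    · apply continuousOn_finset_sum
      intro j _
      apply ContinuousOn.log (continuousOn_const.sub (continuous_pow (α j)).continuousOn)
      intro x hx
      exact ne_of_gt (hfact x hx.1 hx.2 j)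
  have hF0 : F 0 = 0 := by
    have hz : ∀ j : Fin k, (0:ℝ) ^ α j = 0 := fun j => zero_pow (by have := hα j; omega)
    simp [hF, hz]
  have hFsol : ∀ u : ℝ, u ∈ Set.Ioo (0:ℝ) 1 → (∏ j, (1 - u ^ α j) = 1 - u) → F u = 0 := by
    intro u hu heq
    have hne : ∀ j ∈ Finset.univ, (1:ℝ) - u ^ α j ≠ 0 :=
      fun j _ => ne_of_gt (hfact u hu.1.le hu.2 j)
    have hlp := Real.log_prod (s := Finset.univ) (f := fun j => 1 - u ^ α j) hne
    simp only [hF]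
    rw [← hlp, heq, sub_self]
  have hHone : ∀ c ∈ Set.Ioo (0:ℝ) 1, F' c = 0 → H c = 1 := by
    intro c hc h0
    have hc1 : (0:ℝ) < 1 - c := by linarith [hc.2]
    simp only [hF'] at h0
    have h2 : ∑ j, -((α j : ℝ) * c ^ (α j - 1)) / (1 - c ^ α j)
        = -∑ j, (α j : ℝ) * c ^ (α j - 1) / (1 - c ^ α j) := by
      rw [← Finset.sum_neg_distrib]
      exact Finset.sum_congr rfl (fun j _ => neg_div _ _)
    rw [h2] at h0
    have hT : ∑ j, (α j : ℝ) * c ^ (α j - 1) / (1 - c ^ α j) = 1 / (1 - c) := by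
      have : -1 / (1 - c) = -(1 / (1 - c)) := by ring
      rw [this] at h0
      linarith
    have hterm : ∀ j : Fin k, (α j : ℝ) * c ^ (α j - 1) / G j c
        = (1 - c) * ((α j : ℝ) * c ^ (α j - 1) / (1 - c ^ α j)) := by
      intro j
      have hGne : G j c ≠ 0 := ne_of_gt (hGpos j c hc.1)
      rw [hgeom j c]
      rw [mul_div_assoc', mul_div_mul_left _ _ (ne_of_gt hc1)]
    calc H c = ∑ j, (1 - c) * ((α j : ℝ) * c ^ (α j - 1) / (1 - c ^ α j)) := by
          simp only [hH]; exact Finset.sum_congr rfl (fun j _ => hterm j)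
      _ = (1 - c) * ∑ j, (α j : ℝ) * c ^ (α j - 1) / (1 - c ^ α j) := by
          rw [Finset.mul_sum]
      _ = (1 - c) * (1 / (1 - c)) := by rw [hT]
      _ = 1 := by field_simp
  -- uniqueness
  have huniq : ∀ u v : ℝ, u ∈ Set.Ioo (0:ℝ) 1 → v ∈ Set.Ioo (0:ℝ) 1 →
      (∏ j, (1 - u ^ α j) = 1 - u) → (∏ j, (1 - v ^ α j) = 1 - v) → u < v → False := by
    intro u v hu hv hequ heqv huv
    have hFu := hFsol u hu hequ
    have hFv := hFsol v hv heqv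
    obtain ⟨c₁, hc₁, hc₁'⟩ := exists_hasDerivAt_eq_zero hu.1 (hcont u hu.2)
      (by rw [hF0, hFu]) (fun x hx => hderiv x ⟨hx.1, hx.2.trans hu.2⟩)
    obtain ⟨c₂, hc₂, hc₂'⟩ := exists_hasDerivAt_eq_zero huv
      ((hcont v hv.2).mono (Set.Icc_subset_Icc hu.1.le le_rfl))
      (by rw [hFu, hFv]) (fun x hx => hderiv x ⟨hu.1.trans hx.1, hx.2.trans hv.2⟩)
    have h1 : H c₁ = 1 := hHone c₁ ⟨hc₁.1, hc₁.2.trans hu.2⟩ hc₁'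
    have h2 : H c₂ = 1 := hHone c₂ ⟨hu.1.trans hc₂.1, hc₂.2.trans hv.2⟩ hc₂'
    have hlt := hHmono c₁ c₂ hc₁.1 (hc₁.2.trans hc₂.1) (hc₂.2.trans hv.2)
    rw [h1, h2] at hlt
    exact lt_irrefl 1 hlt
  -- existence
  set A : ℕ := ∏ j, α j with hA
  have hA4 : (4:ℝ) ≤ (A:ℝ) := by
    have h1 : (2:ℕ)^k ≤ A := by
      rw [hA]
      calc (2:ℕ)^k = ∏ _j : Fin k, 2 := by simp [Finset.prod_const, Finset.card_univ]
        _ ≤ ∏ j, α j := Finset.prod_le_prod' (fun j _ => hα j)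
    have h2 : (4:ℕ) ≤ 2^k := by
      calc (4:ℕ) = 2^2 := by norm_num
        _ ≤ 2^k := Nat.pow_le_pow_right (by norm_num) hk
    exact_mod_cast h2.trans h1
  set a : ℝ := 1 / (2*(k:ℝ)) with ha
  set b : ℝ := 1 - 1 / (2*(A:ℝ)) with hb
  have hApos : (0:ℝ) < (A:ℝ) := by linarith
  have ha0 : 0 < a := by rw [ha]; positivity
  have ha14 : a ≤ 1/4 := by
    rw [ha, div_le_div_iff₀ (by linarith) (by norm_num)]
    linarith
  have hbA : (1:ℝ) / (2*(A:ℝ)) ≤ 1/8 := by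
    rw [div_le_div_iff₀ (by linarith) (by norm_num)]
    linarith
  have hbpos : (0:ℝ) < 1 / (2*(A:ℝ)) := by positivity
  have hb1 : b < 1 := by rw [hb]; linarith
  have hb0 : (0:ℝ) < b := by rw [hb]; linarith
  have hab : a < b := by rw [hb]; linarith
  have ha1 : a < 1 := by linarith
  have hka : (k:ℝ) * a = 1/2 := by
    rw [ha]
    field_simp
  -- value at a : product > 1 - a
  have hfa : 1 - a < ∏ j, (1 - a ^ α j) := by
    have hw := weierstrass_prod Finset.univ (fun j => a ^ α j)
      (fun j _ => by positivity) (fun j _ => pow_le_one₀ ha0.le (by linarith))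
    have hsum : ∑ j : Fin k, a ^ α j ≤ (k:ℝ) * a^2 := by
      calc ∑ j : Fin k, a ^ α j ≤ ∑ _j : Fin k, a^2 :=
            Finset.sum_le_sum (fun j _ => pow_le_pow_of_le_one ha0.le (by linarith) (hα j))
        _ = (k:ℝ) * a^2 := by simp [Finset.sum_const, Finset.card_univ]
    have : (k:ℝ) * a^2 = a/2 := by
      have : (k:ℝ) * a^2 = ((k:ℝ) * a) * a := by ring
      rw [this, hka]; ring
    nlinarith [hw]
  -- value at b : product < 1 - b
  have hfb : ∏ j, (1 - b ^ α j) < 1 - b := by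
    have hle : ∀ j : Fin k, 1 - b ^ α j ≤ (α j : ℝ) * (1 - b) := by
      intro j
      rw [hgeom j b]
      have hGle : G j b ≤ (α j : ℝ) := by
        simp only [hG]
        calc ∑ i ∈ Finset.range (α j), b ^ i ≤ ∑ _i ∈ Finset.range (α j), (1:ℝ) :=
              Finset.sum_le_sum (fun i _ => pow_le_one₀ hb0.le hb1.le)
          _ = (α j : ℝ) := by simp
      have h1b : (0:ℝ) ≤ 1 - b := by linarith
      calc (1 - b) * G j b ≤ (1 - b) * (α j : ℝ) := mul_le_mul_of_nonneg_left hGle h1b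
        _ = (α j : ℝ) * (1 - b) := by ring
    have hp1 : ∏ j, (1 - b ^ α j) ≤ ∏ j, (α j : ℝ) * (1 - b) :=
      Finset.prod_le_prod (fun j _ => (hfact b hb0.le hb1 j).le) (fun j _ => hle j)
    have hp2 : ∏ j, ((α j : ℝ) * (1 - b)) = (A:ℝ) * (1 - b)^k := by
      rw [Finset.prod_mul_distrib, Finset.prod_const, hA]
      simp [Finset.card_univ]
    have hp3 : (1 - b)^k ≤ (1 - b)^2 :=
      pow_le_pow_of_le_one (by linarith) (by linarith) hk
    have hAb : (A:ℝ) * (1 - b) = 1/2 := by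
      rw [hb]
      field_simp
      ring
    have h1b : (0:ℝ) < 1 - b := by linarith
    have : (A:ℝ) * (1 - b)^2 = (1-b)/2 := by
      have e : (A:ℝ) * (1 - b)^2 = ((A:ℝ) * (1 - b)) * (1-b) := by ring
      rw [e, hAb]; ring
    have hp4 : (A:ℝ) * (1-b)^k ≤ (A:ℝ) * (1-b)^2 := mul_le_mul_of_nonneg_left hp3 hApos.le
    calc ∏ j, (1 - b ^ α j) ≤ ∏ j, ((α j:ℝ) * (1-b)) := hp1
      _ = (A:ℝ) * (1-b)^k := hp2
      _ ≤ (A:ℝ) * (1-b)^2 := hp4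
      _ = (1-b)/2 := this
      _ < 1 - b := by linarith
  -- IVT
  have hcontf : ContinuousOn (fun s : ℝ => ∏ j, (1 - s ^ α j) - (1 - s)) (Set.Icc a b) := by
    apply Continuous.continuousOn
    exact (continuous_finset_prod _ (fun j _ =>
      continuous_const.sub (continuous_pow (α j)))).sub (continuous_const.sub continuous_id)
  have h0mem : (0:ℝ) ∈ Set.Ioo ((fun s : ℝ => ∏ j, (1 - s ^ α j) - (1 - s)) b)
      ((fun s : ℝ => ∏ j, (1 - s ^ α j) - (1 - s)) a) := by
    constructor
    · simpa using sub_neg.mpr hfb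
    · simpa using sub_pos.mpr hfa
  obtain ⟨s, hs, hfs⟩ := intermediate_value_Ioo' hab.le hcontf h0mem
  have hsmem : s ∈ Set.Ioo (0:ℝ) 1 := ⟨ha0.trans hs.1, hs.2.trans hb1⟩
  have hseq : ∏ j, (1 - s ^ α j) = 1 - s := by
    have := hfs
    simp only at this
    linarith [this]
  refine ⟨s, ⟨hsmem, hseq⟩, ?_⟩
  rintro y ⟨hymem, hyeq⟩
  by_contra hne
  rcases lt_or_gt_of_ne hne with h | h
  · exact huniq y s hymem hsmem hyeq hseq h
  · exact huniq s y hsmem hymem hseq hyeq h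
end
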